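/- Let k, r ∈ ℤ₊ and let 𝒫^r : ℝ₊^k → ℝ₊^r be a map given by monomials with natural number exponents that is surjective and satisfies 𝒫^r(s ⊗ u) = 𝒫^r(s) ⊗ 𝒫^r(u) (coordinatewise products). If for some N ∈ ℤ₊ the set E_N := {𝒫^r(s) : s ∈ [2^{-N}, 2^N]^k} ∩ [1,2]^r has nonempty interior in [1,2]^r, then there exists N₀ ∈ ℤ₊ such that [1,2]^r ⊆ {𝒫^r(s) : s ∈ [2^{-N₀}, 2^{N₀}]^k}. -/

import Mathlib

open Set

/-- The set `E_N = {𝒫^r(s) : s ∈ [2^{-N}, 2^N]^k} ∩ [1,2]^r`. -/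
def EN {k r : ℕ} (P : (Fin k → ℝ) → Fin r → ℝ) (N : ℕ) : Set (Fin r → ℝ) :=
  {y | (∀ i, y i ∈ Set.Icc (1 : ℝ) 2) ∧
    ∃ s : Fin k → ℝ, (∀ j, s j ∈ Set.Icc ((2 : ℝ) ^ (-(N : ℤ))) ((2 : ℝ) ^ (N : ℤ))) ∧ P s = y}

/-- If a surjective multiplicative monomial map `𝒫^r : ℝ₊^k → ℝ₊^r` is such that some
`E_N` has nonempty interior in `[1,2]^r`, then `[1,2]^r ⊆ {𝒫^r(s) : s ∈ [2^{-N₀}, 2^{N₀}]^k}`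
for some `N₀ ∈ ℤ₊`. -/
theorem stmt5 (k r : ℕ) (hk : 0 < k) (hr : 0 < r)
    (α : Fin r → Fin k → ℕ)
    (P : (Fin k → ℝ) → Fin r → ℝ)
    (hP : ∀ s i, P s i = ∏ j, s j ^ α i j)
    (hmul : ∀ s u : Fin k → ℝ, P (fun j => s j * u j) = fun i => P s i * P u i)
    (hsurj : ∀ y : Fin r → ℝ, (∀ i, 0 < y i) →
      ∃ s : Fin k → ℝ, (∀ j, 0 < s j) ∧ P s = y)
    (N : ℕ) (hN : 0 < N)
    (hint : ∃ y ∈ EN P N, ∃ ε > (0 : ℝ), ∀ z : Fin r → ℝ,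
      (∀ i, z i ∈ Set.Icc (1 : ℝ) 2) → (∀ i, |z i - y i| < ε) → z ∈ EN P N) :
    ∃ N₀ : ℕ, 0 < N₀ ∧ ∀ y : Fin r → ℝ, (∀ i, y i ∈ Set.Icc (1 : ℝ) 2) →
      ∃ s : Fin k → ℝ,
        (∀ j, s j ∈ Set.Icc ((2 : ℝ) ^ (-(N₀ : ℤ))) ((2 : ℝ) ^ (N₀ : ℤ))) ∧ P s = y := by
  obtain ⟨y, hyE, ε, hε, hball⟩ := hint
  -- choose m with 2/m < ε
  obtain ⟨m, hm1, hmε⟩ : ∃ m : ℕ, 1 ≤ m ∧ 2 * ((m : ℝ))⁻¹ < ε := by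
    obtain ⟨m, hm⟩ := exists_nat_gt (max 1 (2 / ε))
    have hm0 : (0 : ℝ) < m := lt_of_le_of_lt (le_trans zero_le_one (le_max_left _ _)) hm
    refine ⟨m, ?_, ?_⟩
    · exact_mod_cast le_of_lt (lt_of_le_of_lt (le_max_left _ _) hm)
    · have h2 : 2 / ε < m := lt_of_le_of_lt (le_max_right _ _) hm
      rw [div_lt_iff₀ hε] at h2
      rw [mul_inv_lt_iff₀ hm0]
      nlinarith
  have hmR : (1 : ℝ) ≤ m := by exact_mod_cast hm1
  have hmpos : (0 : ℝ) < m := lt_of_lt_of_le one_pos hmR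
  have him : (0 : ℝ) < (m : ℝ)⁻¹ := inv_pos.2 hmpos
  have him1 : ((m : ℝ))⁻¹ ≤ 1 := by
    rw [inv_le_one_iff₀]; right; exact hmR
  -- key : 2^(1/m) ≤ 1 + 1/m
  have hbase : (0 : ℝ) ≤ 1 + (m : ℝ)⁻¹ := by positivity
  have key : (2 : ℝ) ^ ((m : ℝ)⁻¹) ≤ 1 + (m : ℝ)⁻¹ := by
    have h2 : (2 : ℝ) ≤ (1 + (m : ℝ)⁻¹) ^ m := by
      have h := one_add_mul_le_pow (a := (m : ℝ)⁻¹) (by linarith) m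
      have hmm : (m : ℝ) * (m : ℝ)⁻¹ = 1 := mul_inv_cancel₀ hmpos.ne'
      rw [hmm] at h; linarith
    have h3 := Real.rpow_le_rpow (by norm_num) h2 him.le
    rwa [← Real.rpow_natCast (1 + (m : ℝ)⁻¹) m, ← Real.rpow_mul hbase,
      mul_inv_cancel₀ hmpos.ne', Real.rpow_one] at h3
  refine ⟨N * (2 * m + 1), Nat.mul_pos hN (by omega), ?_⟩
  intro z hz
  have hy1 : ∀ i, 1 ≤ y i := fun i => (hyE.1 i).1
  have hy2 : ∀ i, y i ≤ 2 := fun i => (hyE.1 i).2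
  have hypos : ∀ i, 0 < y i := fun i => lt_of_lt_of_le one_pos (hy1 i)
  set c : Fin r → ℝ := fun i => z i / y i with hc
  have hcpos : ∀ i, 0 < c i := fun i => div_pos (lt_of_lt_of_le one_pos (hz i).1) (hypos i)
  have hc_lb : ∀ i, (2 : ℝ)⁻¹ ≤ c i := by
    intro i
    rw [le_div_iff₀ (hypos i)]
    nlinarith [(hz i).1, hy2 i]
  have hc_ub : ∀ i, c i ≤ 2 := by
    intro i
    rw [div_le_iff₀ (hypos i)]
    nlinarith [(hz i).2, hy1 i]
  set w : Fin r → ℝ := fun i => c i ^ ((m : ℝ)⁻¹) with hw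
  have hwpos : ∀ i, 0 < w i := fun i => Real.rpow_pos_of_pos (hcpos i) _
  have hwm : ∀ i, w i ^ m = c i := by
    intro i
    rw [hw]
    rw [← Real.rpow_natCast (c i ^ ((m : ℝ)⁻¹)) m, ← Real.rpow_mul (hcpos i).le,
      inv_mul_cancel₀ hmpos.ne', Real.rpow_one]
  have hw_ub : ∀ i, w i ≤ 1 + (m : ℝ)⁻¹ := fun i =>
    (Real.rpow_le_rpow (hcpos i).le (hc_ub i) him.le).trans key
  have hw_lb : ∀ i, 1 - (m : ℝ)⁻¹ ≤ w i := by
    intro i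
    have h1 : ((2 : ℝ)⁻¹) ^ ((m : ℝ)⁻¹) ≤ w i :=
      Real.rpow_le_rpow (by norm_num) (hc_lb i) him.le
    have h2 : ((2 : ℝ)⁻¹) ^ ((m : ℝ)⁻¹) = ((2 : ℝ) ^ ((m : ℝ)⁻¹))⁻¹ :=
      Real.inv_rpow (by norm_num) _
    have hapos : (0 : ℝ) < (2 : ℝ) ^ ((m : ℝ)⁻¹) := Real.rpow_pos_of_pos two_pos _
    have hia : (0 : ℝ) < ((2 : ℝ) ^ ((m : ℝ)⁻¹))⁻¹ := inv_pos.2 hapos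
    have h4 : 1 ≤ (1 + (m : ℝ)⁻¹) * ((2 : ℝ) ^ ((m : ℝ)⁻¹))⁻¹ := by
      calc (1 : ℝ) = (2 : ℝ) ^ ((m : ℝ)⁻¹) * ((2 : ℝ) ^ ((m : ℝ)⁻¹))⁻¹ :=
            (mul_inv_cancel₀ hapos.ne').symm
      _ ≤ _ := mul_le_mul_of_nonneg_right key hia.le
    have hinv : 1 - (m : ℝ)⁻¹ ≤ ((2 : ℝ) ^ ((m : ℝ)⁻¹))⁻¹ := by
      nlinarith [h4, him1, him, hia, sq_nonneg ((m : ℝ)⁻¹)]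
    linarith [h1, h2 ▸ h1]
  set z1 : Fin r → ℝ := fun i => y i * w i with hz1
  have hz1mem : ∀ i, z1 i ∈ Set.Icc (1 : ℝ) 2 := by
    intro i
    rcases le_or_gt 1 (c i) with h | h
    · have hw1 : 1 ≤ w i := Real.one_le_rpow h him.le
      have hwc : w i ≤ c i := by
        calc w i ≤ c i ^ (1 : ℝ) := Real.rpow_le_rpow_of_exponent_le h him1
        _ = c i := Real.rpow_one _
      have hyc : y i * c i = z i := by
        rw [show c i = z i / y i from rfl, mul_comm, div_mul_cancel₀ _ (hypos i).ne']
      simp only [hz1]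
      constructor
      · nlinarith [hy1 i, hw1]
      · nlinarith [(hz i).2, hypos i, hyc, mul_le_mul_of_nonneg_left hwc (hypos i).le]
    · have hw1 : w i ≤ 1 := Real.rpow_le_one (hcpos i).le h.le him.le
      have hcw : c i ≤ w i := by
        calc c i = c i ^ (1 : ℝ) := (Real.rpow_one _).symm
        _ ≤ w i := Real.rpow_le_rpow_of_exponent_ge (hcpos i) h.le him1
      have hyc : y i * c i = z i := by
        rw [show c i = z i / y i from rfl, mul_comm, div_mul_cancel₀ _ (hypos i).ne']
      simp only [hz1]
      constructor
      · nlinarith [(hz i).1, hypos i, hyc, mul_le_mul_of_nonneg_left hcw (hypos i).le]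
      · nlinarith [hy2 i, hwpos i, hy1 i, mul_le_mul_of_nonneg_left hw1 (hypos i).le]
  have hz1close : ∀ i, |z1 i - y i| < ε := by
    intro i
    have habs : |w i - 1| ≤ (m : ℝ)⁻¹ := abs_le.2 ⟨by linarith [hw_lb i], by linarith [hw_ub i]⟩
    have heq : |z1 i - y i| = y i * |w i - 1| := by
      rw [show z1 i - y i = y i * (w i - 1) by simp [hz1]; ring, abs_mul,
        abs_of_nonneg (by linarith [hy1 i])]
    rw [heq]
    calc y i * |w i - 1| ≤ 2 * (m : ℝ)⁻¹ :=
          mul_le_mul (hy2 i) habs (abs_nonneg _) (by norm_num)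
    _ < ε := hmε
  obtain ⟨s₁, hs₁box, hs₁P⟩ := (hball z1 hz1mem hz1close).2
  obtain ⟨s₀, hs₀box, hs₀P⟩ := hyE.2
  have hpow_pos : (0 : ℝ) < (2 : ℝ) ^ (-(N : ℤ)) := by positivity
  have hs₀pos : ∀ j, 0 < s₀ j := fun j => lt_of_lt_of_le hpow_pos (hs₀box j).1
  have hs₁pos : ∀ j, 0 < s₁ j := fun j => lt_of_lt_of_le hpow_pos (hs₁box j).1
  set u : Fin k → ℝ := fun j => s₁ j / s₀ j with hu
  have hu_ub : ∀ j, u j ≤ (2 : ℝ) ^ (2 * (N : ℤ)) := by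
    intro j
    have : u j ≤ (2 : ℝ) ^ ((N : ℤ)) / (2 : ℝ) ^ (-(N : ℤ)) :=
      div_le_div₀ (by positivity) (hs₁box j).2 hpow_pos (hs₀box j).1
    calc u j ≤ (2 : ℝ) ^ ((N : ℤ)) / (2 : ℝ) ^ (-(N : ℤ)) := this
    _ = (2 : ℝ) ^ (2 * (N : ℤ)) := by
        rw [← zpow_sub₀ (two_ne_zero)]; congr 1; ring
  have hu_lb : ∀ j, (2 : ℝ) ^ (-(2 * (N : ℤ))) ≤ u j := by
    intro j
    have : (2 : ℝ) ^ (-(N : ℤ)) / (2 : ℝ) ^ ((N : ℤ)) ≤ u j :=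
      div_le_div₀ (hs₁pos j).le (hs₁box j).1 (hs₀pos j) (hs₀box j).2
    calc (2 : ℝ) ^ (-(2 * (N : ℤ))) = (2 : ℝ) ^ (-(N : ℤ)) / (2 : ℝ) ^ ((N : ℤ)) := by
          rw [← zpow_sub₀ (two_ne_zero)]; congr 1; ring
    _ ≤ u j := this
  have hupos : ∀ j, 0 < u j := fun j => div_pos (hs₁pos j) (hs₀pos j)
  have hPu : ∀ i, P u i = w i := by
    intro i
    have hue : (fun j => u j * s₀ j) = s₁ := funext fun j => div_mul_cancel₀ _ (hs₀pos j).ne'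
    have hmul' := hmul u s₀
    rw [hue] at hmul'
    have h := congrFun hmul' i
    rw [hs₁P, hs₀P] at h
    -- h : z1 i = P u i * y i
    have hy0 : y i ≠ 0 := (hypos i).ne'
    have : z1 i = y i * w i := rfl
    rw [this] at h
    exact (mul_right_cancel₀ hy0 (by linear_combination h)).symm
  refine ⟨fun j => s₀ j * u j ^ m, ?_, ?_⟩
  · intro j
    have hub : s₀ j * u j ^ m ≤ (2 : ℝ) ^ ((N : ℤ)) * ((2 : ℝ) ^ (2 * (N : ℤ))) ^ m :=
      mul_le_mul (hs₀box j).2 (pow_le_pow_left₀ (hupos j).le (hu_ub j) m)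
        (pow_nonneg (hupos j).le m) (by positivity)
    have hlb : (2 : ℝ) ^ (-(N : ℤ)) * ((2 : ℝ) ^ (-(2 * (N : ℤ)))) ^ m ≤ s₀ j * u j ^ m :=
      mul_le_mul (hs₀box j).1 (pow_le_pow_left₀ (by positivity) (hu_lb j) m)
        (by positivity) (hs₀pos j).le
    have e1 : (2 : ℝ) ^ ((N : ℤ)) * ((2 : ℝ) ^ (2 * (N : ℤ))) ^ m
        = (2 : ℝ) ^ ((N * (2 * m + 1) : ℕ) : ℤ) := by
      rw [← zpow_natCast ((2 : ℝ) ^ (2 * (N : ℤ))) m, ← zpow_mul, ← zpow_add₀ (two_ne_zero (α := ℝ))]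
      congr 1
      push_cast
      ring
    have e2 : (2 : ℝ) ^ (-(N : ℤ)) * ((2 : ℝ) ^ (-(2 * (N : ℤ)))) ^ m
        = (2 : ℝ) ^ (-((N * (2 * m + 1) : ℕ) : ℤ)) := by
      rw [← zpow_natCast ((2 : ℝ) ^ (-(2 * (N : ℤ)))) m, ← zpow_mul, ← zpow_add₀ (two_ne_zero (α := ℝ))]
      congr 1
      push_cast
      ring
    exact ⟨e2 ▸ hlb, e1 ▸ hub⟩
  · funext i
    rw [hP]
    have step : ∀ j : Fin k, (s₀ j * u j ^ m) ^ α i j = s₀ j ^ α i j * (u j ^ α i j) ^ m := by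
      intro j
      rw [mul_pow, ← pow_mul, ← pow_mul, mul_comm m (α i j)]
    calc ∏ j, (s₀ j * u j ^ m) ^ α i j
        = ∏ j, (s₀ j ^ α i j * (u j ^ α i j) ^ m) := by
          exact Finset.prod_congr rfl fun j _ => step j
    _ = (∏ j, s₀ j ^ α i j) * ∏ j, (u j ^ α i j) ^ m := Finset.prod_mul_distrib
    _ = (∏ j, s₀ j ^ α i j) * (∏ j, u j ^ α i j) ^ m := by rw [Finset.prod_pow]
    _ = P s₀ i * (P u i) ^ m := by rw [hP, hP]
    _ = y i * w i ^ m := by rw [hs₀P, hPu]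
    _ = y i * c i := by rw [hwm i]
    _ = z i := by rw [show c i = z i / y i from rfl, mul_comm, div_mul_cancel₀ _ (hypos i).ne']
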